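/- arXiv:2303.13125 — 3 statements merged into one kernel-verified Lean document; each statement's English description precedes it below -/
import Mathlib

section
/- Let f : ℝ → ℝ be nondecreasing and L_f-Lipschitz continuous with L_f > 0, and define Φ(r) = ∫₀^r f'(s)·s ds (where f' exists a.e. since f is Lipschitz; equivalently use Φ(r) = r·f(r) - ∫₀^r f(s) ds). Then for all a, b ∈ ℝ: b·(f(b) - f(a)) ≥ (Φ(b) - Φ(a)) + (f(b) - f(a))²/(2·L_f). -/
lemma lipCont (f : ℝ → ℝ) (Lf : ℝ) (hLf : 0 < Lf)
    (hlip : ∀ x y : ℝ, |f x - f y| ≤ Lf * |x - y|) : Continuous f := by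
  have : LipschitzWith ⟨Lf, hLf.le⟩ f := by
    apply LipschitzWith.of_dist_le_mul
    intro x y
    rw [Real.dist_eq, Real.dist_eq]
    exact hlip x y
  exact this.continuous

lemma key1 (f : ℝ → ℝ) (Lf : ℝ) (hLf : 0 < Lf)
    (hmono : Monotone f)
    (hlip : ∀ x y : ℝ, |f x - f y| ≤ Lf * |x - y|)
    (a b : ℝ) (hab : a ≤ b) :
    (f b - f a) ^ 2 / (2 * Lf) ≤ ∫ s in a..b, (f s - f a) := by
  have hcont : Continuous f := lipCont f Lf hLf hlip
  set c := (f b - f a) / Lf with hc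
  have hD : 0 ≤ f b - f a := sub_nonneg.2 (hmono hab)
  have hc0 : 0 ≤ c := div_nonneg hD hLf.le
  have hcb : c ≤ b - a := by
    have h := hlip b a
    rw [abs_of_nonneg hD, abs_of_nonneg (sub_nonneg.2 hab)] at h
    rw [hc, div_le_iff₀ hLf]; linarith
  have h1 : a ≤ b - c := by linarith
  have h2 : b - c ≤ b := by linarith
  have hint : ∀ u v : ℝ, IntervalIntegrable (fun s => f s - f a) MeasureTheory.volume u v :=
    fun u v => (hcont.sub continuous_const).intervalIntegrable u v
  have hsplit : (∫ s in a..(b-c), (f s - f a)) + ∫ s in (b-c)..b, (f s - f a)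
      = ∫ s in a..b, (f s - f a) :=
    intervalIntegral.integral_add_adjacent_intervals (hint _ _) (hint _ _)
  have hpos : 0 ≤ ∫ s in a..(b-c), (f s - f a) :=
    intervalIntegral.integral_nonneg h1 (fun s hs => sub_nonneg.2 (hmono hs.1))
  have hlow : (∫ s in (b-c)..b, (f b - f a - Lf * (b - s)))
      ≤ ∫ s in (b-c)..b, (f s - f a) := by
    apply intervalIntegral.integral_mono_on h2
    · exact (Continuous.intervalIntegrable (by continuity) _ _)
    · exact hint _ _
    · intro s hs
      have h3 : f b - f s ≤ Lf * (b - s) := by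
        have h := hlip b s
        rw [abs_of_nonneg (sub_nonneg.2 (hmono hs.2)), abs_of_nonneg (sub_nonneg.2 hs.2)] at h
        linarith
      linarith
  have hval : (∫ s in (b-c)..b, (f b - f a - Lf * (b - s))) = (f b - f a) ^ 2 / (2 * Lf) := by
    have e : (fun s => f b - f a - Lf * (b - s)) = fun s => (f b - f a - Lf * b) + Lf * s := by
      funext s; ring
    have hlin : IntervalIntegrable (fun s : ℝ => Lf * s) MeasureTheory.volume (b-c) b :=
      Continuous.intervalIntegrable (by continuity) _ _
    rw [e, intervalIntegral.integral_add (intervalIntegrable_const) hlin,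
      intervalIntegral.integral_const, intervalIntegral.integral_const_mul,
      integral_id]
    rw [smul_eq_mul, hc]
    field_simp
    ring
  linarith

lemma key2 (f : ℝ → ℝ) (Lf : ℝ) (hLf : 0 < Lf)
    (hmono : Monotone f)
    (hlip : ∀ x y : ℝ, |f x - f y| ≤ Lf * |x - y|)
    (a b : ℝ) (hab : a ≤ b) :
    (f b - f a) ^ 2 / (2 * Lf) ≤ ∫ s in a..b, (f b - f s) := by
  have hcont : Continuous f := lipCont f Lf hLf hlip
  set c := (f b - f a) / Lf with hc
  have hD : 0 ≤ f b - f a := sub_nonneg.2 (hmono hab)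
  have hc0 : 0 ≤ c := div_nonneg hD hLf.le
  have hcb : c ≤ b - a := by
    have h := hlip b a
    rw [abs_of_nonneg hD, abs_of_nonneg (sub_nonneg.2 hab)] at h
    rw [hc, div_le_iff₀ hLf]; linarith
  have h1 : a ≤ a + c := by linarith
  have h2 : a + c ≤ b := by linarith
  have hint : ∀ u v : ℝ, IntervalIntegrable (fun s => f b - f s) MeasureTheory.volume u v :=
    fun u v => (continuous_const.sub hcont).intervalIntegrable u v
  have hsplit : (∫ s in a..(a+c), (f b - f s)) + ∫ s in (a+c)..b, (f b - f s)
      = ∫ s in a..b, (f b - f s) :=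
    intervalIntegral.integral_add_adjacent_intervals (hint _ _) (hint _ _)
  have hpos : 0 ≤ ∫ s in (a+c)..b, (f b - f s) :=
    intervalIntegral.integral_nonneg h2 (fun s hs => sub_nonneg.2 (hmono hs.2))
  have hlow : (∫ s in a..(a+c), (f b - f a - Lf * (s - a)))
      ≤ ∫ s in a..(a+c), (f b - f s) := by
    apply intervalIntegral.integral_mono_on h1
    · exact (Continuous.intervalIntegrable (by continuity) _ _)
    · exact hint _ _
    · intro s hs
      have h3 : f s - f a ≤ Lf * (s - a) := by
        have h := hlip s a
        rw [abs_of_nonneg (sub_nonneg.2 (hmono hs.1)), abs_of_nonneg (sub_nonneg.2 hs.1)] at h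
        linarith
      linarith
  have hval : (∫ s in a..(a+c), (f b - f a - Lf * (s - a))) = (f b - f a) ^ 2 / (2 * Lf) := by
    have e : (fun s => f b - f a - Lf * (s - a)) = fun s => (f b - f a + Lf * a) + (-Lf) * s := by
      funext s; ring
    have hlin : IntervalIntegrable (fun s : ℝ => -Lf * s) MeasureTheory.volume a (a+c) :=
      Continuous.intervalIntegrable (by continuity) _ _
    rw [e, intervalIntegral.integral_add (intervalIntegrable_const) hlin,
      intervalIntegral.integral_const, intervalIntegral.integral_const_mul,
      integral_id]
    rw [smul_eq_mul, hc]
    field_simp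
    ring
  linarith

theorem stmt_0 (f : ℝ → ℝ) (Lf : ℝ) (hLf : 0 < Lf)
    (hmono : Monotone f)
    (hlip : ∀ x y : ℝ, |f x - f y| ≤ Lf * |x - y|)
    (Φ : ℝ → ℝ)
    (hΦ : ∀ r : ℝ, Φ r = r * f r - ∫ s in (0:ℝ)..r, f s) :
    ∀ a b : ℝ, b * (f b - f a) ≥ (Φ b - Φ a) + (f b - f a) ^ 2 / (2 * Lf) := by
  intro a b
  have hcont : Continuous f := lipCont f Lf hLf hlip
  have hintf : ∀ u v : ℝ, IntervalIntegrable f MeasureTheory.volume u v :=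
    fun u v => hcont.intervalIntegrable u v
  have hsub : (∫ s in a..b, (f s - f a)) = (∫ s in a..b, f s) - (b - a) * f a := by
    rw [intervalIntegral.integral_sub (hintf a b) intervalIntegrable_const,
      intervalIntegral.integral_const, smul_eq_mul]
  have hadj : (∫ s in (0:ℝ)..a, f s) + ∫ s in a..b, f s = ∫ s in (0:ℝ)..b, f s :=
    intervalIntegral.integral_add_adjacent_intervals (hintf _ _) (hintf _ _)
  have hid : b * (f b - f a) - (Φ b - Φ a) = ∫ s in a..b, (f s - f a) := by
    rw [hΦ, hΦ, hsub]; linarith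
  rcases le_total a b with h | h
  · have := key1 f Lf hLf hmono hlip a b h
    linarith
  · have hk := key2 f Lf hLf hmono hlip b a h
    have e : (∫ s in a..b, (f s - f a)) = ∫ s in b..a, (f a - f s) := by
      rw [intervalIntegral.integral_symm a b, ← intervalIntegral.integral_neg]
      congr 1; funext s; ring
    have esq : (f a - f b) ^ 2 = (f b - f a) ^ 2 := by ring
    rw [esq] at hk
    linarith
end

section
/- Let f : ℝ → ℝ be nondecreasing and L-Lipschitz with L > 0. Then for all a, b ∈ ℝ: ∫_a^b (f(s) - f(a)) ds ≥ (f(b) - f(a))² / (2·L). -/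
lemma key_lemma_stmt1 (f : ℝ → ℝ) (L : ℝ) (hL : 0 < L) (hmono : Monotone f)
    (hlip : ∀ x y : ℝ, |f x - f y| ≤ L * |x - y|)
    (a b : ℝ) (hab : a ≤ b) :
    (∫ s in a..b, (f s - f a)) ≥ (f b - f a) ^ 2 / (2 * L) := by
  have hcont : Continuous f := by
    have : LipschitzWith (Real.toNNReal L) f := by
      apply LipschitzWith.of_dist_le_mul
      intro x y
      simpa [Real.dist_eq, Real.coe_toNNReal L hL.le] using hlip x y
    exact this.continuous
  set d := f b - f a with hd
  have hd0 : 0 ≤ d := sub_nonneg.2 (hmono hab)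
  have hdL : d ≤ L * (b - a) := by
    have h := hlip b a
    rw [abs_of_nonneg hd0, abs_of_nonneg (sub_nonneg.2 hab)] at h
    exact h
  set c := b - d / L with hc
  have hdivnn : 0 ≤ d / L := div_nonneg hd0 hL.le
  have hcb : c ≤ b := by simp [hc]; linarith
  have hac : a ≤ c := by
    have : d / L ≤ b - a := (div_le_iff₀ hL).2 (by linarith [hdL])
    simp [hc]; linarith
  have hint : ∀ p q : ℝ, IntervalIntegrable (fun s => f s - f a) MeasureTheory.volume p q :=
    fun p q => (hcont.sub continuous_const).intervalIntegrable p q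
  have hsplit : (∫ s in a..b, (f s - f a))
      = (∫ s in a..c, (f s - f a)) + (∫ s in c..b, (f s - f a)) :=
    (intervalIntegral.integral_add_adjacent_intervals (hint a c) (hint c b)).symm
  have h1 : 0 ≤ ∫ s in a..c, (f s - f a) :=
    intervalIntegral.integral_nonneg hac (fun x hx => sub_nonneg.2 (hmono hx.1))
  have hptwise : ∀ s ∈ Set.Icc c b, d - L * (b - s) ≤ f s - f a := by
    intro s hs
    have h := hlip b s
    rw [abs_of_nonneg (sub_nonneg.2 hs.2)] at h
    have := le_abs_self (f b - f s)
    simp only [hd]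
    linarith
  have hintpoly : IntervalIntegrable (fun s => d - L * (b - s)) MeasureTheory.volume c b := by
    apply Continuous.intervalIntegrable
    continuity
  have h2 : (∫ s in c..b, (d - L * (b - s))) ≤ ∫ s in c..b, (f s - f a) :=
    intervalIntegral.integral_mono_on hcb hintpoly (hint c b) hptwise
  have hcalc : (∫ s in c..b, (d - L * (b - s))) = d ^ 2 / (2 * L) := by
    have heq : ∀ s : ℝ, d - L * (b - s) = (d - L * b) + L * s := fun s => by ring
    have hintL : IntervalIntegrable (fun s : ℝ => L * s) MeasureTheory.volume c b := by
      apply Continuous.intervalIntegrable; continuity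
    simp_rw [heq]
    rw [intervalIntegral.integral_add (intervalIntegrable_const) hintL,
      intervalIntegral.integral_const, intervalIntegral.integral_const_mul,
      integral_id, hc]
    field_simp
    have hLi : L * L⁻¹ = 1 := mul_inv_cancel₀ hL.ne'
    linear_combination (2 * d ^ 2 - 2 * L * d * b) * hLi
  have : d ^ 2 / (2 * L) ≤ ∫ s in a..b, (f s - f a) := by
    rw [hsplit]; linarith [hcalc ▸ h2]
  exact this

theorem stmt_1 (f : ℝ → ℝ) (L : ℝ) (hL : 0 < L)
    (hmono : Monotone f)
    (hlip : ∀ x y : ℝ, |f x - f y| ≤ L * |x - y|) :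
    ∀ a b : ℝ, (∫ s in a..b, (f s - f a)) ≥ (f b - f a) ^ 2 / (2 * L) := by
  intro a b
  rcases le_total a b with hab | hba
  · exact key_lemma_stmt1 f L hL hmono hlip a b hab
  · set g : ℝ → ℝ := fun s => -f (-s) with hg
    have hgmono : Monotone g := fun x y hxy => neg_le_neg (hmono (neg_le_neg hxy))
    have hglip : ∀ x y : ℝ, |g x - g y| ≤ L * |x - y| := by
      intro x y
      have h := hlip (-y) (-x)
      have h1 : g x - g y = f (-y) - f (-x) := by simp [hg]; ring
      calc |g x - g y| = |f (-y) - f (-x)| := by rw [h1]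
        _ ≤ L * |(-y : ℝ) - -x| := h
        _ = L * |x - y| := by rw [show ((-y : ℝ) - -x) = x - y by ring]
    have hkey := key_lemma_stmt1 g L hL hgmono hglip (-a) (-b) (neg_le_neg hba)
    have hcomp : (∫ t in (-a)..(-b), (g t - g (-a))) = ∫ s in b..a, (f a - f s) := by
      have h := intervalIntegral.integral_comp_neg (a := -a) (b := -b) (fun x => f a - f x)
      simp only [neg_neg] at h
      rw [← h]
      apply intervalIntegral.integral_congr
      intro t _
      simp [hg]
      ring
    have hsym : (∫ s in a..b, (f s - f a)) = ∫ s in b..a, (f a - f s) := by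
      rw [intervalIntegral.integral_symm, ← intervalIntegral.integral_neg]
      congr 1; funext s; ring
    have hval : g (-b) - g (-a) = f a - f b := by simp [hg]; ring
    rw [hcomp, hval] at hkey
    rw [hsym]
    calc (f b - f a) ^ 2 / (2 * L) = (f a - f b) ^ 2 / (2 * L) := by ring_nf
    _ ≤ ∫ s in b..a, (f a - f s) := hkey
end

section
/- Let I be a finite set, E a symmetric edge relation on I without loops, and v : I × I → ℝ antisymmetric with ∑_{j:(i,j)∈E} v(i,j) = 0 for each i. Let f : ℝ → ℝ be nondecreasing and L_f-Lipschitz with L_f > 0. Then for all w : I → ℝ: ∑_{i∈I} ∑_{j:(i,j)∈E} v(i,j)⁻ (f(w_i) − f(w_j)) w_i ≥ (1/(2L_f)) ∑_{i∈I} ∑_{j:(i,j)∈E} v(i,j)⁻ (f(w_i) − f(w_j))² ≥ 0. -/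
open intervalIntegral

private lemma lin_int (p q c b : ℝ) :
    (∫ s in c..b, (p + q * s)) = p * (b - c) + q * (b ^ 2 - c ^ 2) / 2 := by
  rw [intervalIntegral.integral_add (g := fun s : ℝ => q * s) (intervalIntegrable_const (c := p))
      ((continuous_const.mul continuous_id').intervalIntegrable c b),
    intervalIntegral.integral_const, intervalIntegral.integral_const_mul, integral_id]
  simp [smul_eq_mul]
  ring

private lemma int_lb (f : ℝ → ℝ) (L : ℝ) (hL : 0 < L) (hmono : Monotone f)
    (hlip : ∀ x y : ℝ, |f x - f y| ≤ L * |x - y|) (a b : ℝ) :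
    (b - a) * f a + (f b - f a) ^ 2 / (2 * L) ≤ ∫ s in a..b, f s := by
  have hint : ∀ u v : ℝ, IntervalIntegrable f MeasureTheory.volume u v :=
    fun u v => hmono.intervalIntegrable
  rcases le_total a b with hab | hab
  · set δ := (f b - f a) / L with hδdef
    have hfab : f a ≤ f b := hmono hab
    have hδ0 : 0 ≤ δ := div_nonneg (by linarith) hL.le
    have hδL : δ * L = f b - f a := by rw [hδdef, div_mul_cancel₀ _ hL.ne']
    have hδ : δ ≤ b - a := by
      rw [hδdef, div_le_iff₀ hL]
      have := hlip b a
      rw [abs_of_nonneg (by linarith : (0:ℝ) ≤ f b - f a),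
        abs_of_nonneg (by linarith : (0:ℝ) ≤ b - a)] at this
      linarith
    set c := b - δ with hcdef
    have hac : a ≤ c := by simp only [hcdef]; linarith
    have hcb : c ≤ b := by simp only [hcdef]; linarith
    have hsplit : (∫ s in a..c, f s) + ∫ s in c..b, f s = ∫ s in a..b, f s :=
      intervalIntegral.integral_add_adjacent_intervals (hint a c) (hint c b)
    have h1 : (c - a) * f a ≤ ∫ s in a..c, f s := by
      have := intervalIntegral.integral_mono_on hac
        (intervalIntegrable_const (c := f a)) (hint a c)
        (fun s hs => hmono hs.1)
      simpa [smul_eq_mul] using this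
    have h2 : (∫ s in c..b, ((f b - L * b) + L * s)) ≤ ∫ s in c..b, f s := by
      apply intervalIntegral.integral_mono_on hcb
        ((continuous_const.add (continuous_const.mul continuous_id')).intervalIntegrable c b)
        (hint c b)
      intro s hs
      have hbs : (0:ℝ) ≤ b - s := by linarith [hs.2]
      have h := hlip b s
      rw [abs_of_nonneg hbs] at h
      have := le_abs_self (f b - f s)
      show f b - L * b + L * s ≤ f s
      linarith
    rw [lin_int] at h2
    have hsq : (f b - f a) ^ 2 / (2 * L) = L * δ ^ 2 / 2 := by
      rw [hδdef]; field_simp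
    have hkey : (f b - L * b) * (b - c) + L * (b ^ 2 - c ^ 2) / 2
        = (b - a) * f a + L * δ ^ 2 / 2 - (c - a) * f a := by
      have hfb : f b = f a + δ * L := by linarith
      rw [hfb, hcdef]; ring
    rw [← hsplit]
    clear_value δ c
    linarith
  · set δ := (f a - f b) / L with hδdef
    have hfab : f b ≤ f a := hmono hab
    have hδ0 : 0 ≤ δ := div_nonneg (by linarith) hL.le
    have hδL : δ * L = f a - f b := by rw [hδdef, div_mul_cancel₀ _ hL.ne']
    have hδ : δ ≤ a - b := by
      rw [hδdef, div_le_iff₀ hL]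
      have := hlip a b
      rw [abs_of_nonneg (by linarith : (0:ℝ) ≤ f a - f b),
        abs_of_nonneg (by linarith : (0:ℝ) ≤ a - b)] at this
      linarith
    set c := b + δ with hcdef
    have hbc : b ≤ c := by simp only [hcdef]; linarith
    have hca : c ≤ a := by simp only [hcdef]; linarith
    have hsplit : (∫ s in b..c, f s) + ∫ s in c..a, f s = ∫ s in b..a, f s :=
      intervalIntegral.integral_add_adjacent_intervals (hint b c) (hint c a)
    have h1 : (∫ s in c..a, f s) ≤ (a - c) * f a := by
      have := intervalIntegral.integral_mono_on hca (hint c a)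
        (intervalIntegrable_const (c := f a))
        (fun s hs => hmono hs.2)
      simpa [smul_eq_mul] using this
    have h2 : (∫ s in b..c, f s) ≤ ∫ s in b..c, ((f b - L * b) + L * s) := by
      apply intervalIntegral.integral_mono_on hbc (hint b c)
        ((continuous_const.add (continuous_const.mul continuous_id')).intervalIntegrable b c)
      intro s hs
      have hbs : (0:ℝ) ≤ s - b := by linarith [hs.1]
      have h := hlip s b
      rw [abs_of_nonneg hbs] at h
      have := le_abs_self (f s - f b)
      show f s ≤ f b - L * b + L * s
      linarith
    rw [lin_int] at h2
    have hflip : (∫ s in a..b, f s) = -∫ s in b..a, f s :=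
      intervalIntegral.integral_symm b a
    have hsq : (f b - f a) ^ 2 / (2 * L) = L * δ ^ 2 / 2 := by
      rw [hδdef]; field_simp; ring
    have hkey : (f b - L * b) * (c - b) + L * (c ^ 2 - b ^ 2) / 2
        = (a - b) * f a - L * δ ^ 2 / 2 - (a - c) * f a := by
      have hfb : f b = f a - δ * L := by linarith
      rw [hfb, hcdef]; ring
    rw [hflip, ← hsplit]
    clear_value δ c
    linarith

private noncomputable def Phi (f : ℝ → ℝ) (r : ℝ) : ℝ := r * f r - ∫ s in (0:ℝ)..r, f s

private lemma key_pt (f : ℝ → ℝ) (L : ℝ) (hL : 0 < L) (hmono : Monotone f)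
    (hlip : ∀ x y : ℝ, |f x - f y| ≤ L * |x - y|) (a b : ℝ) :
    Phi f b - Phi f a + (f b - f a) ^ 2 / (2 * L) ≤ (f b - f a) * b := by
  have hint : ∀ u v : ℝ, IntervalIntegrable f MeasureTheory.volume u v :=
    fun u v => hmono.intervalIntegrable
  have hsplit : (∫ s in (0:ℝ)..a, f s) + ∫ s in a..b, f s = ∫ s in (0:ℝ)..b, f s :=
    intervalIntegral.integral_add_adjacent_intervals (hint 0 a) (hint a b)
  have h := int_lb f L hL hmono hlip a b
  simp only [Phi]
  nlinarith [h, hsplit]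

theorem stmt_13 {I : Type*} [Fintype I] [DecidableEq I]
    (E : I → I → Prop) [DecidableRel E]
    (hEsymm : ∀ i j, E i j → E j i) (hEirr : ∀ i, ¬ E i i)
    (v : I → I → ℝ) (hanti : ∀ i j, v i j = -(v j i))
    (hdiv : ∀ i, ∑ j ∈ Finset.univ.filter (fun j => E i j), v i j = 0)
    (f : ℝ → ℝ) (Lf : ℝ) (hLf : 0 < Lf) (hmono : Monotone f)
    (hlip : ∀ x y : ℝ, |f x - f y| ≤ Lf * |x - y|)
    (w : I → ℝ) :
    (∑ i, ∑ j ∈ Finset.univ.filter (fun j => E i j),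
        (-(min (v i j) 0)) * (f (w i) - f (w j)) * w i)
      ≥ (1 / (2 * Lf)) * ∑ i, ∑ j ∈ Finset.univ.filter (fun j => E i j),
          (-(min (v i j) 0)) * (f (w i) - f (w j)) ^ 2 ∧
    0 ≤ (1 / (2 * Lf)) * ∑ i, ∑ j ∈ Finset.univ.filter (fun j => E i j),
          (-(min (v i j) 0)) * (f (w i) - f (w j)) ^ 2 := by
  classical
  set N : I → I → ℝ := fun i j => -(min (v i j) 0) with hNdef
  have hN0 : ∀ i j, 0 ≤ N i j := fun i j => by
    simp only [hNdef, neg_nonneg]; exact min_le_right _ _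
  have hswap : ∀ g : I → I → ℝ,
      (∑ i, ∑ j ∈ Finset.univ.filter (fun j => E i j), g i j)
      = ∑ i, ∑ j ∈ Finset.univ.filter (fun j => E i j), g j i := by
    intro g
    simp only [Finset.sum_filter]
    rw [Finset.sum_comm]
    refine Finset.sum_congr rfl fun i _ => Finset.sum_congr rfl fun j _ => ?_
    by_cases h : E i j
    · rw [if_pos h, if_pos (hEsymm i j h)]
    · rw [if_neg h, if_neg (fun h' => h (hEsymm j i h'))]
  have hNswap : ∀ i j, N j i = max (v i j) 0 := by
    intro i j
    have h := min_neg_neg (v i j) (0:ℝ)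
    simp only [neg_zero] at h
    simp only [hNdef]
    rw [hanti j i, h, neg_neg]
  have htel : ∀ Φ : ℝ → ℝ,
      (∑ i, ∑ j ∈ Finset.univ.filter (fun j => E i j), N i j * (Φ (w i) - Φ (w j))) = 0 := by
    intro Φ
    have h2 : (∑ i, ∑ j ∈ Finset.univ.filter (fun j => E i j), N i j * Φ (w j))
        = ∑ i, ∑ j ∈ Finset.univ.filter (fun j => E i j), max (v i j) 0 * Φ (w i) := by
      rw [hswap (fun i j => N i j * Φ (w j))]
      exact Finset.sum_congr rfl fun i _ => Finset.sum_congr rfl fun j _ => by rw [hNswap i j]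
    calc (∑ i, ∑ j ∈ Finset.univ.filter (fun j => E i j), N i j * (Φ (w i) - Φ (w j)))
        = (∑ i, ∑ j ∈ Finset.univ.filter (fun j => E i j), N i j * Φ (w i))
          - ∑ i, ∑ j ∈ Finset.univ.filter (fun j => E i j), N i j * Φ (w j) := by
          simp only [mul_sub, Finset.sum_sub_distrib]
      _ = ∑ i, ∑ j ∈ Finset.univ.filter (fun j => E i j),
            (N i j * Φ (w i) - max (v i j) 0 * Φ (w i)) := by
          rw [h2]; simp only [Finset.sum_sub_distrib]
      _ = ∑ i, (∑ j ∈ Finset.univ.filter (fun j => E i j), -(v i j)) * Φ (w i) := by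
          refine Finset.sum_congr rfl fun i _ => ?_
          rw [Finset.sum_mul]
          refine Finset.sum_congr rfl fun j _ => ?_
          have hmm : N i j - max (v i j) 0 = -(v i j) := by
            have := min_add_max (v i j) (0:ℝ)
            simp only [hNdef]; linarith
          rw [← sub_mul, hmm]
      _ = 0 := by
          refine Finset.sum_eq_zero fun i _ => ?_
          rw [Finset.sum_neg_distrib, hdiv i]
          simp
  have hB : 0 ≤ ∑ i, ∑ j ∈ Finset.univ.filter (fun j => E i j),
      N i j * (f (w i) - f (w j)) ^ 2 := by
    refine Finset.sum_nonneg fun i _ => Finset.sum_nonneg fun j _ =>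
      mul_nonneg (hN0 i j) (sq_nonneg _)
  constructor
  · have hterm : ∀ i ∈ (Finset.univ : Finset I), ∀ j ∈ Finset.univ.filter (fun j => E i j),
        N i j * ((Phi f (w i) - Phi f (w j)) + (f (w i) - f (w j)) ^ 2 / (2 * Lf))
        ≤ N i j * (f (w i) - f (w j)) * w i := by
      intro i _ j _
      rw [mul_assoc]
      exact mul_le_mul_of_nonneg_left (key_pt f Lf hLf hmono hlip (w j) (w i)) (hN0 i j)
    have hsum := Finset.sum_le_sum (fun i hi =>
      Finset.sum_le_sum (hterm i hi))
    have heq : (∑ i, ∑ j ∈ Finset.univ.filter (fun j => E i j),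
        N i j * ((Phi f (w i) - Phi f (w j)) + (f (w i) - f (w j)) ^ 2 / (2 * Lf)))
        = (∑ i, ∑ j ∈ Finset.univ.filter (fun j => E i j), N i j * (Phi f (w i) - Phi f (w j)))
          + (1 / (2 * Lf)) * ∑ i, ∑ j ∈ Finset.univ.filter (fun j => E i j),
              N i j * (f (w i) - f (w j)) ^ 2 := by
      simp only [mul_add, Finset.sum_add_distrib]
      congr 1
      rw [Finset.mul_sum]
      refine Finset.sum_congr rfl fun i _ => ?_
      rw [Finset.mul_sum]
      refine Finset.sum_congr rfl fun j _ => ?_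
      field_simp
    rw [heq, htel (Phi f), zero_add] at hsum
    exact hsum
  · exact mul_nonneg (by positivity) hB
end
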